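/- For real x > 1 and complex z with Re z = 1/2, the remainder r_z(x) = ∫_x^∞ (-z t^{z-2}/((1-z) log² t)) dt satisfies |r_z(x)| ≤ (1/(|1-z| √x log² x))(1 + 4/log x). -/

import Mathlib

open MeasureTheory Set Filter Topology

theorem r_z_bound (x : ℝ) (hx : 1 < x) (z : ℂ) (hz : z.re = 1 / 2) :
    ‖∫ t in Set.Ioi x, -(z * (t : ℂ) ^ (z - 2)) / ((1 - z) * (((Real.log t) ^ 2 : ℝ) : ℂ))‖ ≤
      1 / (‖1 - z‖ * Real.sqrt x * (Real.log x) ^ 2) * (1 + 4 / Real.log x) := by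
  have hx0 : (0:ℝ) < x := lt_trans one_pos hx
  have hlx : 0 < Real.log x := Real.log_pos hx
  have hz1 : z - 1 ≠ 0 := by
    intro h
    have := congrArg Complex.re h
    simp [hz] at this
    norm_num at this
  have hz1' : (1:ℂ) - z ≠ 0 := by
    intro h
    have := congrArg Complex.re h
    simp [hz] at this
    norm_num at this
  have habs_z : ‖z‖ = ‖1 - z‖ := by
    rw [Complex.norm_def, Complex.norm_def]
    congr 1
    simp only [Complex.normSq_apply, Complex.sub_re, Complex.sub_im, Complex.one_re,
      Complex.one_im, hz]
    ring
  have habs_sub : ‖z - 1‖ = ‖1 - z‖ := by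
    rw [← neg_sub (1:ℂ) z, norm_neg]
  have habs0 : 0 < ‖1 - z‖ := by
    simpa using norm_pos_iff.mpr hz1'
  -- antiderivative
  set F : ℝ → ℂ := fun t => ((t:ℂ) ^ (z-1) / (z-1)) / ((((Real.log t : ℝ)) : ℂ) ^ 2) with hF
  set F' : ℝ → ℂ := fun t => (t:ℂ) ^ (z-2) * ((((Real.log t : ℝ)) : ℂ) ^ 2)⁻¹
      - 2 * (t:ℂ) ^ (z-2) / ((z-1) * (((Real.log t : ℝ)) : ℂ) ^ 3) with hF'
  have hz2ne : z - 2 ≠ -1 := by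
    intro h
    have := congrArg Complex.re h
    simp [hz] at this
    norm_num at this
  have hderiv : ∀ t ∈ Ici x, HasDerivAt F (F' t) t := by
    intro t ht
    have ht1 : 1 < t := lt_of_lt_of_le hx ht
    have ht0 : (0:ℝ) < t := lt_trans one_pos ht1
    have hlt : 0 < Real.log t := Real.log_pos ht1
    have hltC : (((Real.log t : ℝ)) : ℂ) ≠ 0 := by
      exact_mod_cast hlt.ne'
    have htC : (t:ℂ) ≠ 0 := by exact_mod_cast ht0.ne'
    have h1 : HasDerivAt (fun y : ℝ => (y:ℂ) ^ (z-1) / (z-1)) ((t:ℂ) ^ (z-2)) t := by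
      have := hasDerivAt_ofReal_cpow_const' ht0.ne' hz2ne
      simpa [show z - 2 + 1 = z - 1 by ring] using this
    have h2 : HasDerivAt (fun y : ℝ => (((Real.log y : ℝ)) : ℂ)) (((t⁻¹ : ℝ) : ℂ)) t :=
      (Real.hasDerivAt_log ht0.ne').ofReal_comp
    have hpow2 : ((((Real.log t : ℝ)) : ℂ)) ^ 2 ≠ 0 := pow_ne_zero 2 hltC
    have h3 : HasDerivAt (fun y : ℝ => (((Real.log y : ℝ)) : ℂ) ^ 2)
        (((t⁻¹ : ℝ) : ℂ) * (((Real.log t : ℝ)) : ℂ) + (((Real.log t : ℝ)) : ℂ) * ((t⁻¹ : ℝ) : ℂ)) t := by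
      simpa [pow_two] using h2.fun_mul h2
    have h4 := h1.div h3 hpow2
    refine h4.congr_deriv ?_
    have hsplit : (t:ℂ) ^ (z-1) = (t:ℂ) ^ (z-2) * t := by
      rw [show z - 1 = z - 2 + 1 by ring, Complex.cpow_add _ _ htC, Complex.cpow_one]
    rw [hF', hsplit]
    push_cast
    field_simp
    ring
  have hlog_ne : ∀ t ∈ Ioi x, (((Real.log t : ℝ)) : ℂ) ≠ 0 := by
    intro t ht
    have : 0 < Real.log t := Real.log_pos (lt_trans hx ht)
    exact_mod_cast this.ne'
  have hcont_cpow : ∀ w : ℂ, ContinuousOn (fun t : ℝ => (t:ℂ) ^ w) (Ioi x) := by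
    intro w t ht
    have ht0 : (0:ℝ) < t := lt_trans hx0 ht
    exact ((continuousAt_cpow_const (Or.inl (by simpa using ht0))).comp
      Complex.continuous_ofReal.continuousAt).continuousWithinAt
  have hcont_log : ContinuousOn (fun t : ℝ => (((Real.log t : ℝ)) : ℂ)) (Ioi x) := by
    refine Complex.continuous_ofReal.comp_continuousOn (Real.continuousOn_log.mono ?_)
    intro t ht
    simp only [Set.mem_compl_iff, Set.mem_singleton_iff]
    exact (lt_trans hx0 ht).ne'
  have hF'cont : ContinuousOn F' (Ioi x) := by
    rw [hF']
    refine ContinuousOn.sub ?_ ?_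
    · exact (hcont_cpow (z-2)).mul ((hcont_log.pow 2).inv₀
        (fun t ht => pow_ne_zero 2 (hlog_ne t ht)))
    · exact (continuousOn_const.mul (hcont_cpow (z-2))).div
        (continuousOn_const.mul (hcont_log.pow 3))
        (fun t ht => mul_ne_zero hz1 (pow_ne_zero 3 (hlog_ne t ht)))
  have habsT : ∀ t : ℝ, x < t → ‖(t:ℂ) ^ (z-2)‖ = t ^ (-(3:ℝ)/2) := by
    intro t ht
    have ht0 : (0:ℝ) < t := lt_trans hx0 ht
    rw [Complex.norm_cpow_eq_rpow_re_of_pos ht0]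
    congr 1
    simp [Complex.sub_re, hz]
    norm_num
  set CF : ℝ := (Real.log x ^ 2)⁻¹ + 2 / (‖1-z‖ * Real.log x ^ 3) with hCF
  have hnormF' : ∀ t ∈ Ioi x, ‖F' t‖ ≤ CF * t ^ (-(3:ℝ)/2) := by
    intro t ht
    have ht' : x < t := ht
    have ht1 : 1 < t := lt_trans hx ht'
    have ht0 : (0:ℝ) < t := lt_trans one_pos ht1
    have hlt : 0 < Real.log t := Real.log_pos ht1
    have hlog_le : Real.log x ≤ Real.log t := Real.log_le_log hx0 ht'.le
    have e1 : ‖F' t‖ ≤ t ^ (-(3:ℝ)/2) * ((Real.log t)^2)⁻¹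
        + 2 * t ^ (-(3:ℝ)/2) / (‖1-z‖ * (Real.log t)^3) := by
      refine le_trans (norm_sub_le _ _) (le_of_eq ?_)
      simp only [norm_mul, norm_inv, norm_pow,
        Complex.norm_real, Real.norm_eq_abs, norm_div,
        Complex.norm_two, habsT t ht', habs_sub, abs_of_pos hlt]
    refine e1.trans ?_
    calc t ^ (-(3:ℝ)/2) * ((Real.log t)^2)⁻¹
          + 2 * t ^ (-(3:ℝ)/2) / (‖1-z‖ * (Real.log t)^3)
        ≤ t ^ (-(3:ℝ)/2) * ((Real.log x)^2)⁻¹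
          + 2 * t ^ (-(3:ℝ)/2) / (‖1-z‖ * (Real.log x)^3) := by gcongr
      _ = CF * t ^ (-(3:ℝ)/2) := by rw [hCF]; ring
  have hbase : IntegrableOn (fun t : ℝ => t ^ (-(3:ℝ)/2)) (Ioi x) := by
    refine integrableOn_Ioi_rpow_of_lt (by norm_num) hx0
  have hF'int : IntegrableOn F' (Ioi x) := by
    refine Integrable.mono' (hbase.const_mul CF)
      (hF'cont.aestronglyMeasurable measurableSet_Ioi) ?_
    filter_upwards [ae_restrict_mem measurableSet_Ioi] with t ht
    exact hnormF' t ht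
  have htend : Tendsto F atTop (𝓝 0) := by
    have h0 : Tendsto (fun t : ℝ =>
        (‖1-z‖ * Real.log x ^ 2)⁻¹ * t ^ (-(1:ℝ)/2)) atTop (𝓝 0) := by
      have := (tendsto_rpow_neg_atTop (by norm_num : (0:ℝ) < 1/2)).const_mul
        ((‖1-z‖ * Real.log x ^ 2)⁻¹)
      simpa [neg_div] using this
    refine squeeze_zero_norm' ?_ h0
    filter_upwards [eventually_gt_atTop x] with t ht
    have ht1 : 1 < t := lt_trans hx ht
    have ht0 : (0:ℝ) < t := lt_trans one_pos ht1
    have hlt : 0 < Real.log t := Real.log_pos ht1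
    have hlog_le : Real.log x ≤ Real.log t := Real.log_le_log hx0 ht.le
    have habsx : ‖(t:ℂ) ^ (z-1)‖ = t ^ (-(1:ℝ)/2) := by
      rw [Complex.norm_cpow_eq_rpow_re_of_pos ht0]
      congr 1
      simp [Complex.sub_re, hz]
      norm_num
    have : ‖F t‖ = t ^ (-(1:ℝ)/2) / (‖1-z‖ * Real.log t ^ 2) := by
      rw [hF]
      simp only [norm_div, norm_pow, Complex.norm_real, Real.norm_eq_abs, habsx, habs_sub,
        abs_of_pos hlt]
      rw [div_div]
    have hle : (‖1-z‖ * Real.log t ^ 2)⁻¹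
        ≤ (‖1-z‖ * Real.log x ^ 2)⁻¹ := by
      apply inv_anti₀ (by positivity)
      gcongr
    rw [this, div_eq_mul_inv, mul_comm]
    exact mul_le_mul_of_nonneg_right hle (Real.rpow_nonneg ht0.le _)
  have key : (∫ t in Ioi x, F' t) = 0 - F x :=
    integral_Ioi_of_hasDerivAt_of_tendsto' hderiv hF'int htend
  -- remainder term
  set r : ℝ → ℂ := fun t => 2 * z * (t:ℂ) ^ (z-2) / ((z-1)^2 * (((Real.log t : ℝ)) : ℂ)^3) with hreq
  set Cr : ℝ := 2 / (‖1-z‖ * Real.log x ^ 3) with hCr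
  have hnormr : ∀ t ∈ Ioi x, ‖r t‖ ≤ Cr * t ^ (-(3:ℝ)/2) := by
    intro t ht
    have ht' : x < t := ht
    have ht1 : 1 < t := lt_trans hx ht'
    have ht0 : (0:ℝ) < t := lt_trans one_pos ht1
    have hlt : 0 < Real.log t := Real.log_pos ht1
    have hlog_le : Real.log x ≤ Real.log t := Real.log_le_log hx0 ht'.le
    have e1 : ‖r t‖ = 2 * t ^ (-(3:ℝ)/2) / (‖1-z‖ * Real.log t ^ 3) := by
      rw [hreq]
      simp only [norm_div, norm_mul, norm_pow, Complex.norm_real, Real.norm_eq_abs,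
        Complex.norm_two, habsT t ht', habs_sub, abs_of_pos hlt, habs_z]
      rw [sq (‖1-z‖)]
      field_simp
    rw [e1, hCr]
    calc 2 * t ^ (-(3:ℝ)/2) / (‖1-z‖ * Real.log t ^ 3)
        ≤ 2 * t ^ (-(3:ℝ)/2) / (‖1-z‖ * Real.log x ^ 3) := by gcongr
      _ = 2 / (‖1-z‖ * Real.log x ^ 3) * t ^ (-(3:ℝ)/2) := by ring
  have hrcont : ContinuousOn r (Ioi x) := by
    rw [hreq]
    exact (continuousOn_const.mul (hcont_cpow (z-2))).div
      (continuousOn_const.mul (hcont_log.pow 3))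
      (fun t ht => mul_ne_zero (pow_ne_zero 2 hz1) (pow_ne_zero 3 (hlog_ne t ht)))
  have hrint : IntegrableOn r (Ioi x) := by
    refine Integrable.mono' (hbase.const_mul Cr)
      (hrcont.aestronglyMeasurable measurableSet_Ioi) ?_
    filter_upwards [ae_restrict_mem measurableSet_Ioi] with t ht
    exact hnormr t ht
  have hbase_val : (∫ t in Ioi x, t ^ (-(3:ℝ)/2)) = 2 * x ^ (-(1:ℝ)/2) := by
    rw [integral_Ioi_rpow_of_lt (by norm_num) hx0]
    rw [show (-(3:ℝ)/2 + 1) = -(1:ℝ)/2 by norm_num]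
    rw [neg_div]
    field_simp
  have hrbound : ‖∫ t in Ioi x, r t‖ ≤ Cr * (2 * x ^ (-(1:ℝ)/2)) := by
    calc ‖∫ t in Ioi x, r t‖ ≤ ∫ t in Ioi x, Cr * t ^ (-(3:ℝ)/2) := by
          refine norm_integral_le_of_norm_le (hbase.const_mul Cr) ?_
          filter_upwards [ae_restrict_mem measurableSet_Ioi] with t ht
          exact hnormr t ht
      _ = Cr * (2 * x ^ (-(1:ℝ)/2)) := by
          rw [MeasureTheory.integral_const_mul, hbase_val]
  -- split the integrand
  have hsplit_int : Set.EqOn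
      (fun t : ℝ => -(z * (t : ℂ) ^ (z - 2)) / ((1 - z) * (((Real.log t) ^ 2 : ℝ) : ℂ)))
      (fun t => (z/(z-1)) * F' t + r t) (Ioi x) := by
    intro t ht
    have hltC := hlog_ne t ht
    simp only [hF', hreq]
    push_cast
    rw [show (1:ℂ) - z = -(z-1) by ring]
    generalize z - 1 = u
    ring
  rw [setIntegral_congr_fun measurableSet_Ioi hsplit_int,
    MeasureTheory.integral_add (hF'int.const_mul _) hrint,
    integral_const_mul, key]
  have habs1 : ‖z/(z-1) * (0 - F x)‖ =
      x ^ (-(1:ℝ)/2) / (‖1-z‖ * Real.log x ^ 2) := by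
    have habsx : ‖(x:ℂ) ^ (z-1)‖ = x ^ (-(1:ℝ)/2) := by
      rw [Complex.norm_cpow_eq_rpow_re_of_pos hx0]
      congr 1
      simp [Complex.sub_re, hz]
      norm_num
    rw [zero_sub, norm_mul, norm_neg, hF]
    simp only [norm_div, norm_pow, Complex.norm_real, Real.norm_eq_abs, habsx, habs_sub, abs_of_pos hlx, habs_z]
    field_simp
  calc ‖z/(z-1) * (0 - F x) + ∫ t in Ioi x, r t‖
      ≤ ‖z/(z-1) * (0 - F x)‖ + ‖∫ t in Ioi x, r t‖ :=
        norm_add_le _ _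
    _ ≤ x ^ (-(1:ℝ)/2) / (‖1-z‖ * Real.log x ^ 2) + Cr * (2 * x ^ (-(1:ℝ)/2)) := by
        rw [habs1]; gcongr
    _ = 1 / (‖1 - z‖ * Real.sqrt x * (Real.log x) ^ 2) * (1 + 4 / Real.log x) := by
        rw [hCr, Real.sqrt_eq_rpow, show x ^ (-(1:ℝ)/2) = (x ^ ((1:ℝ)/2))⁻¹ by
          rw [← Real.rpow_neg hx0.le]; norm_num]
        have hxp : (0:ℝ) < x ^ ((1:ℝ)/2) := Real.rpow_pos_of_pos hx0 _
        field_simp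
        ring
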